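/- Let A be a random subset of {1,…,n} with independent inclusion probability α and β = 1 − α. Then E[deg lcm([A]_q)] = ∑_{1 < d ≤ n} φ(d)(1 − β^⌊n/d⌋). -/

import Mathlib

open Polynomial Finset

/-- Probability of drawing exactly the subset `A ⊆ {1,…,n}` in the model `B(n,α)`. -/
noncomputable def prob (n : ℕ) (α : ℝ) (A : Finset ℕ) : ℝ :=
  α ^ A.card * (1 - α) ^ (n - A.card)

/-- `X(A) = deg lcm([A]_q)`. -/
noncomputable def degLcm (A : Finset ℕ) : ℕ :=
  (A.lcm fun k => ∑ i ∈ Finset.range k, (X : ℚ[X]) ^ i).natDegree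

lemma degLcm_eq (A : Finset ℕ) (hA : 0 ∉ A) :
    degLcm A = ∑ d ∈ A.biUnion (fun k => k.divisors.erase 1), Nat.totient d := by
  classical
  set D := A.biUnion (fun k => k.divisors.erase 1) with hD
  set P : ℚ[X] := ∏ d ∈ D, cyclotomic d ℚ with hP
  have hPne : P ≠ 0 := by
    apply prod_ne_zero_iff.2
    intro d _
    exact cyclotomic_ne_zero d ℚ
  have h1 : ∀ k ∈ A, (∑ i ∈ Finset.range k, (X : ℚ[X]) ^ i) ∣ P := by
    intro k hk
    rw [← prod_cyclotomic_eq_geom_sum (Nat.pos_of_ne_zero (fun h => hA (h ▸ hk))) ℚ]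
    exact Finset.prod_dvd_prod_of_subset _ _ _ (Finset.subset_biUnion_of_mem (fun k => k.divisors.erase 1) hk)
  have hl : (A.lcm fun k => ∑ i ∈ Finset.range k, (X : ℚ[X]) ^ i) ∣ P :=
    Finset.lcm_dvd h1
  have h2 : P ∣ (A.lcm fun k => ∑ i ∈ Finset.range k, (X : ℚ[X]) ^ i) := by
    apply Finset.prod_dvd_of_coprime
    · intro a _ b _ hab
      exact cyclotomic.isCoprime_rat hab
    · intro d hd
      obtain ⟨k, hk, hdk⟩ := Finset.mem_biUnion.mp hd
      refine dvd_trans ?_ (Finset.dvd_lcm hk)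
      rw [← prod_cyclotomic_eq_geom_sum (Nat.pos_of_ne_zero (fun h => hA (h ▸ hk))) ℚ]
      exact Finset.dvd_prod_of_mem _ hdk
  have hlne : (A.lcm fun k => ∑ i ∈ Finset.range k, (X : ℚ[X]) ^ i) ≠ 0 := by
    intro h
    rw [h] at hl
    exact hPne (zero_dvd_iff.mp hl)
  have : degLcm A = P.natDegree :=
    le_antisymm (Polynomial.natDegree_le_of_dvd hl hPne)
      (Polynomial.natDegree_le_of_dvd h2 hlne)
  rw [this, hP, Polynomial.natDegree_prod _ _ (fun d _ => cyclotomic_ne_zero d ℚ)]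
  exact Finset.sum_congr rfl fun d _ => natDegree_cyclotomic d ℚ

lemma sum_pow_card (s : Finset ℕ) (a b : ℝ) :
    ∑ A ∈ s.powerset, a ^ A.card * b ^ (s.card - A.card) = (a + b) ^ s.card := by
  classical
  have h := Finset.prod_add (fun _ : ℕ => a) (fun _ => b) s
  rw [Finset.prod_const] at h
  rw [h]
  refine Finset.sum_congr rfl fun t ht => ?_
  rw [Finset.prod_const, Finset.prod_const, Finset.card_sdiff_of_subset (Finset.mem_powerset.mp ht)]

lemma sum_prob_powerset (n : ℕ) (α : ℝ) (s : Finset ℕ) (hs : s ⊆ Finset.Icc 1 n) :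
    ∑ A ∈ s.powerset, prob n α A = (1 - α) ^ (n - s.card) := by
  classical
  have hcard : s.card ≤ n := by
    have := Finset.card_le_card hs
    simpa [Nat.card_Icc] using this
  have : ∀ A ∈ s.powerset, prob n α A
      = (1 - α) ^ (n - s.card) * (α ^ A.card * (1 - α) ^ (s.card - A.card)) := by
    intro A hA
    have hAc : A.card ≤ s.card := Finset.card_le_card (Finset.mem_powerset.mp hA)
    have : n - A.card = (n - s.card) + (s.card - A.card) := by omega
    rw [prob, this, pow_add]
    ring
  rw [Finset.sum_congr rfl this, ← Finset.mul_sum, sum_pow_card]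
  simp

/-- `E[deg lcm([A]_q)] = ∑_{1 < d ≤ n} φ(d)(1 − β^⌊n/d⌋)` in the model `B(n,α)`. -/
theorem expectation_degLcm (n : ℕ) (α : ℝ) (hα0 : 0 ≤ α) (hα1 : α ≤ 1) :
    ∑ A ∈ (Finset.Icc 1 n).powerset, prob n α A * (degLcm A : ℝ)
      = ∑ d ∈ Finset.Icc 2 n, (Nat.totient d : ℝ) * (1 - (1 - α) ^ (n / d)) := by
  classical
  have hdeg : ∀ A ∈ (Finset.Icc 1 n).powerset,
      prob n α A * (degLcm A : ℝ)
        = ∑ d ∈ Finset.Icc 2 n,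
            (if ∃ k ∈ A, d ∣ k then prob n α A * (Nat.totient d : ℝ) else 0) := by
    intro A hA
    have hsub := Finset.mem_powerset.mp hA
    have h0 : 0 ∉ A := fun h => by simpa using (Finset.mem_Icc.mp (hsub h)).1
    have hfilt : (Finset.Icc 2 n).filter (fun d => ∃ k ∈ A, d ∣ k)
        = A.biUnion (fun k => k.divisors.erase 1) := by
      ext d
      simp only [Finset.mem_filter, Finset.mem_biUnion, Finset.mem_erase, Nat.mem_divisors,
        Finset.mem_Icc]
      constructor
      · rintro ⟨⟨h2, hn⟩, k, hk, hdk⟩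
        exact ⟨k, hk, by omega, hdk, fun h => h0 (h ▸ hk)⟩
      · rintro ⟨k, hk, hd1, hdk, hk0⟩
        have hkn : k ≤ n := (Finset.mem_Icc.mp (hsub hk)).2
        have hdle : d ≤ k := Nat.le_of_dvd (Nat.pos_of_ne_zero hk0) hdk
        have hd0 : d ≠ 0 := fun h => hk0 (by simpa [h] using hdk)
        exact ⟨⟨by omega, le_trans hdle hkn⟩, k, hk, hdk⟩
    have hdl : (degLcm A : ℝ)
        = ∑ d ∈ Finset.Icc 2 n, (if ∃ k ∈ A, d ∣ k then (Nat.totient d : ℝ) else 0) := by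
      rw [degLcm_eq A h0, ← hfilt, Finset.sum_filter, Nat.cast_sum]
      exact Finset.sum_congr rfl fun d _ => by split <;> simp
    rw [hdl, Finset.mul_sum]
    exact Finset.sum_congr rfl fun d _ => by split <;> simp
  rw [Finset.sum_congr rfl hdeg, Finset.sum_comm]
  refine Finset.sum_congr rfl fun d hd => ?_
  have htot : ∑ A ∈ (Finset.Icc 1 n).powerset, prob n α A = 1 := by
    rw [sum_prob_powerset n α _ subset_rfl]
    simp [Nat.card_Icc]
  have hIoc : Finset.Icc 1 n = Finset.Ioc 0 n := by rw [← Finset.Icc_add_one_left_eq_Ioc]; rfl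
  have hcardM : ((Finset.Icc 1 n).filter (fun k => d ∣ k)).card = n / d := by
    rw [hIoc]; exact Nat.Ioc_filter_dvd_card_eq_div n d
  have hcardM' : ((Finset.Icc 1 n).filter (fun k => ¬ d ∣ k)).card = n - n / d := by
    have h := Finset.card_filter_add_card_filter_not
      (s := Finset.Icc 1 n) (p := fun k => d ∣ k)
    rw [hcardM] at h
    simp [Nat.card_Icc] at h
    omega
  have hnd : n / d ≤ n := Nat.div_le_self n d
  have hnotP : ((Finset.Icc 1 n).powerset.filter (fun A => ¬ ∃ k ∈ A, d ∣ k))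
      = ((Finset.Icc 1 n).filter (fun k => ¬ d ∣ k)).powerset := by
    ext A
    constructor
    · intro h
      obtain ⟨h1, h2⟩ := Finset.mem_filter.mp h
      rw [Finset.mem_powerset] at h1
      push_neg at h2
      exact Finset.mem_powerset.mpr fun k hk => Finset.mem_filter.mpr ⟨h1 hk, h2 k hk⟩
    · intro h
      rw [Finset.mem_powerset] at h
      refine Finset.mem_filter.mpr ⟨Finset.mem_powerset.mpr
        fun k hk => (Finset.mem_filter.mp (h hk)).1, ?_⟩
      push_neg
      exact fun k hk => (Finset.mem_filter.mp (h hk)).2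
  have hsum2 : ∑ A ∈ ((Finset.Icc 1 n).powerset.filter (fun A => ¬ ∃ k ∈ A, d ∣ k)),
      prob n α A = (1 - α) ^ (n / d) := by
    rw [hnotP, sum_prob_powerset n α _ (Finset.filter_subset _ _), hcardM']
    congr 1
    omega
  have hsplit := Finset.sum_filter_add_sum_filter_not ((Finset.Icc 1 n).powerset)
    (fun A => ∃ k ∈ A, d ∣ k) (prob n α)
  rw [htot] at hsplit
  have hsum1 : ∑ A ∈ ((Finset.Icc 1 n).powerset.filter (fun A => ∃ k ∈ A, d ∣ k)),
      prob n α A = 1 - (1 - α) ^ (n / d) := by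
    rw [hsum2] at hsplit
    linarith
  calc ∑ A ∈ (Finset.Icc 1 n).powerset,
        (if ∃ k ∈ A, d ∣ k then prob n α A * (Nat.totient d : ℝ) else 0)
      = ∑ A ∈ ((Finset.Icc 1 n).powerset.filter (fun A => ∃ k ∈ A, d ∣ k)),
          prob n α A * (Nat.totient d : ℝ) := (Finset.sum_filter _ _).symm
    _ = (∑ A ∈ ((Finset.Icc 1 n).powerset.filter (fun A => ∃ k ∈ A, d ∣ k)),
          prob n α A) * (Nat.totient d : ℝ) := by rw [Finset.sum_mul]
    _ = (Nat.totient d : ℝ) * (1 - (1 - α) ^ (n / d)) := by rw [hsum1, mul_comm]
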